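/- Let J ≥ 0 be an integer and let α be a real number with 0 < α < π. Then the (2J+1)×(2J+1) real symmetric prolate matrix P(α) has 2J+1 pairwise distinct eigenvalues; that is, its spectrum is simple: if v and w are nonzero real eigenvectors of P(α) with P(α)v = σv and P(α)w = σw for the same eigenvalue σ, then v and w are linearly dependent. -/

import Mathlib

open Complex intervalIntegral

/-- The prolate matrix entry `p_{mn}(α)`: `α/π` for `m = n` and
`sin((m−n)α)/(π(m−n))` for `m ≠ n`. -/
noncomputable def prolateR (α : ℝ) (m n : ℤ) : ℝ :=
  if m = n then α / Real.pi
  else Real.sin (((m - n : ℤ) : ℝ) * α) / (Real.pi * ((m - n : ℤ) : ℝ))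

/-- The `(2J+1) × (2J+1)` prolate matrix `P(α)` indexed by `m, n ∈ {−J, …, J}`. -/
noncomputable def prolateMatrix (α : ℝ) (J : ℕ) :
    Matrix (Fin (2 * J + 1)) (Fin (2 * J + 1)) ℝ :=
  Matrix.of fun i j => prolateR α (((i : ℕ) : ℤ) - (J : ℤ)) (((j : ℕ) : ℤ) - (J : ℤ))

/-! ### Auxiliary kernel integrals -/

noncomputable def Sker (k : ℤ) (a : ℝ) : ℂ := ∫ θ in (-a)..a, Complex.exp (k * θ * Complex.I)

lemma Sker_zero (a : ℝ) : Sker 0 a = 2*a := by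
  simp [Sker]; ring

lemma Sker_ne {k : ℤ} (hk : k ≠ 0) (a : ℝ) :
    Sker k a = ((2 * Real.sin (k * a) / k : ℝ) : ℂ) := by
  have hkc : (k:ℂ) ≠ 0 := Int.cast_ne_zero.mpr hk
  have hc : ((k:ℂ) * Complex.I) ≠ 0 := mul_ne_zero hkc Complex.I_ne_zero
  have h0 := integral_exp_mul_complex (a := -a) (b := a) hc
  push_cast at h0
  have h1 : Sker k a = (Complex.exp ((k*Complex.I) * a) - Complex.exp ((k*Complex.I)*(-a)))/(k*Complex.I) := by
    rw [Sker, ← h0]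
    congr 1; ext θ; ring_nf
  rw [h1]
  have e1 : ((k:ℂ)*Complex.I)*(a:ℂ) = ((k*a : ℝ):ℂ) * Complex.I := by push_cast; ring
  have e2 : ((k:ℂ)*Complex.I)*(-(a:ℂ)) = (-(k*a : ℝ):ℂ) * Complex.I := by push_cast; ring
  rw [e1, e2, Complex.exp_mul_I, Complex.exp_mul_I, Complex.cos_neg, Complex.sin_neg]
  push_cast
  field_simp
  ring

lemma Sker_even (k : ℤ) (a : ℝ) : Sker (-k) a = Sker k a := by
  rcases eq_or_ne k 0 with rfl | hk
  · norm_num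
  · rw [Sker_ne hk, Sker_ne (neg_ne_zero.mpr hk)]
    push_cast
    rw [neg_mul, Complex.sin_neg]
    rcases eq_or_ne ((k:ℂ)) 0 with h | h
    · simp [h]
    · field_simp

lemma Sker_pi {k : ℤ} (hk : k ≠ 0) : Sker k Real.pi = 0 := by
  rw [Sker_ne hk, Real.sin_int_mul_pi]
  norm_num

lemma Sker_prolate (α : ℝ) (m n : ℤ) :
    Sker (m - n) α = ((2 * Real.pi * prolateR α m n : ℝ) : ℂ) := by
  rcases eq_or_ne m n with rfl | hmn
  · rw [sub_self, Sker_zero, prolateR]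
    rw [if_pos rfl]
    push_cast
    have : (Real.pi : ℂ) ≠ 0 := by exact_mod_cast Real.pi_ne_zero
    field_simp
  · have hk : m - n ≠ 0 := sub_ne_zero.mpr hmn
    rw [Sker_ne hk, prolateR, if_neg hmn]
    have h3 : ((m - n : ℤ) : ℝ) ≠ 0 := Int.cast_ne_zero.mpr hk
    congr 1
    push_cast at h3 ⊢
    field_simp

lemma prolateR_symm (α : ℝ) (m n : ℤ) : prolateR α m n = prolateR α n m := by
  rcases eq_or_ne m n with rfl | hmn
  · rfl
  · rw [prolateR, prolateR, if_neg hmn, if_neg (Ne.symm hmn)]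
    have h : ((n - m : ℤ) : ℝ) = -(((m - n : ℤ) : ℝ)) := by push_cast; ring
    rw [h, neg_mul, Real.sin_neg, mul_neg, neg_div_neg_eq]

/-! ### Index bookkeeping and the trigonometric polynomial -/

def eI (J : ℕ) (i : Fin (2*J+1)) : ℤ := ((i : ℕ) : ℤ) - (J : ℤ)

lemma eI_inj {J : ℕ} : Function.Injective (eI J) := by
  intro i j h
  have : ((i:ℕ):ℤ) = ((j:ℕ):ℤ) := by unfold eI at h; omega
  exact Fin.ext (by exact_mod_cast this)

def EigRel (J : ℕ) (α σ : ℝ) (u : Fin (2*J+1) → ℝ) : Prop :=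
  ∀ i, ∑ j, prolateR α (eI J i) (eI J j) * u j = σ * u i

noncomputable def Ffun {J : ℕ} (u : Fin (2*J+1) → ℝ) (θ : ℝ) : ℂ :=
  ∑ i, (u i : ℂ) * Complex.exp ((eI J i : ℂ) * θ * Complex.I)

lemma cont_exp (k : ℤ) : Continuous fun θ : ℝ => Complex.exp ((k:ℂ) * θ * Complex.I) := by
  apply Complex.continuous_exp.comp
  continuity

lemma Ffun_cont {J : ℕ} (u : Fin (2*J+1) → ℝ) : Continuous (Ffun u) :=
  continuous_finset_sum _ fun i _ => continuous_const.mul (cont_exp _)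

section sums
variable {J : ℕ} {α σ : ℝ} {u : Fin (2*J+1) → ℝ}

lemma inner_alpha (H : EigRel J α σ u) (j' : Fin (2*J+1)) :
    ∑ i, (u i : ℂ) * Sker (eI J i - eI J j') α = ((2*Real.pi*(σ * u j') : ℝ) : ℂ) := by
  have step : ∀ i : Fin (2*J+1), (u i : ℂ) * Sker (eI J i - eI J j') α
      = ((2*Real.pi * (prolateR α (eI J j') (eI J i) * u i) : ℝ) : ℂ) := by
    intro i
    rw [Sker_prolate, prolateR_symm]
    push_cast
    ring
  rw [Finset.sum_congr rfl (fun i _ => step i)]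
  rw [← Complex.ofReal_sum]
  norm_cast
  rw [← Finset.mul_sum, H j']

lemma inner_pi (j' : Fin (2*J+1)) :
    ∑ i, (u i : ℂ) * Sker (eI J i - eI J j') Real.pi = ((2*Real.pi* u j' : ℝ) : ℂ) := by
  rw [Finset.sum_eq_single j']
  · rw [sub_self, Sker_zero]
    push_cast
    ring
  · intro i _ hne
    rw [Sker_pi (sub_ne_zero.mpr (fun h => hne (eI_inj h))), mul_zero]
  · intro h
    exact absurd (Finset.mem_univ j') h

lemma sumA (a : ℝ) (v : Fin (2*J+1) → ℝ)
    (hv : ∀ j', ∑ i, (u i : ℂ) * Sker (eI J i - eI J j') a = ((2*Real.pi * v j' : ℝ):ℂ)) :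
    ∑ i, ∑ j, (u i : ℂ) * u j * Sker (eI J i - eI J j) a
      = ((2*Real.pi * ∑ i, u i * v i : ℝ):ℂ) := by
  have inner : ∀ i : Fin (2*J+1), ∑ j, (u i : ℂ) * u j * Sker (eI J i - eI J j) a
      = ((u i * (2*Real.pi * v i) : ℝ):ℂ) := by
    intro i
    have : ∑ j, (u i : ℂ) * u j * Sker (eI J i - eI J j) a
        = (u i : ℂ) * ∑ j, (u j : ℂ) * Sker (eI J j - eI J i) a := by
      rw [Finset.mul_sum]
      refine Finset.sum_congr rfl fun j _ => ?_
      rw [show eI J i - eI J j = -(eI J j - eI J i) by ring, Sker_even]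
      ring
    rw [this, hv i]
    push_cast
    ring
  rw [Finset.sum_congr rfl fun i _ => inner i, ← Complex.ofReal_sum]
  norm_cast
  rw [Finset.mul_sum]
  exact Finset.sum_congr rfl fun i _ => by ring

lemma sumB (a : ℝ) (v : Fin (2*J+1) → ℝ)
    (hv : ∀ j', ∑ i, (u i : ℂ) * Sker (eI J i - eI J j') a = ((2*Real.pi * v j' : ℝ):ℂ))
    (hlast : u (Fin.last (2*J)) = 0) :
    ∑ i, ∑ j, (u i : ℂ) * u j * Sker (eI J i - eI J j - 1) a
      = ((2*Real.pi * ∑ j₀ : Fin (2*J), u j₀.castSucc * v j₀.succ : ℝ):ℂ) := by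
  rw [Finset.sum_comm]
  have inner : ∀ j : Fin (2*J+1), ∑ i, (u i : ℂ) * u j * Sker (eI J i - eI J j - 1) a
      = (u j : ℂ) * ∑ i, (u i : ℂ) * Sker (eI J i - eI J j - 1) a := by
    intro j; rw [Finset.mul_sum]; exact Finset.sum_congr rfl fun i _ => by ring
  rw [Finset.sum_congr rfl fun j _ => inner j, Fin.sum_univ_castSucc]
  rw [hlast]
  push_cast
  rw [zero_mul, add_zero, Finset.mul_sum]
  refine Finset.sum_congr rfl fun j₀ _ => ?_
  have he : ∀ i, eI J i - eI J j₀.castSucc - 1 = eI J i - eI J j₀.succ := by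
    intro i
    simp only [eI, Fin.coe_castSucc, Fin.val_succ]
    push_cast
    ring
  rw [Finset.sum_congr rfl fun i _ => by rw [he i]]
  rw [hv j₀.succ]
  push_cast
  ring

lemma sumC (a : ℝ) (v : Fin (2*J+1) → ℝ)
    (hv : ∀ j', ∑ i, (u i : ℂ) * Sker (eI J i - eI J j') a = ((2*Real.pi * v j' : ℝ):ℂ))
    (hlast : u (Fin.last (2*J)) = 0) :
    ∑ i, ∑ j, (u i : ℂ) * u j * Sker (eI J i - eI J j + 1) a
      = ((2*Real.pi * ∑ j₀ : Fin (2*J), u j₀.castSucc * v j₀.succ : ℝ):ℂ) := by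
  rw [← sumB a v hv hlast, Finset.sum_comm]
  refine Finset.sum_congr rfl fun j _ => Finset.sum_congr rfl fun i _ => ?_
  rw [show eI J i - eI J j + 1 = -(eI J j - eI J i - 1) by ring, Sker_even]
  ring

lemma Tint (u : Fin (2*J+1) → ℝ) (c : ℤ) (a : ℝ) :
    (∫ θ in (-a)..a, (Ffun u θ * (starRingEnd ℂ) (Ffun u θ) * Complex.exp (c * θ * Complex.I)))
    = ∑ i, ∑ j, (u i:ℂ) * u j * Sker (eI J i - eI J j + c) a := by
  have pointwise : ∀ θ : ℝ, (Ffun u θ * (starRingEnd ℂ) (Ffun u θ) * Complex.exp (c * θ * Complex.I))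
      = ∑ i, ∑ j, (u i:ℂ) * u j * Complex.exp (((eI J i - eI J j + c : ℤ) : ℂ) * θ * Complex.I) := by
    intro θ
    rw [Ffun, map_sum, Finset.sum_mul_sum, Finset.sum_mul]
    refine Finset.sum_congr rfl fun i _ => ?_
    rw [Finset.sum_mul]
    refine Finset.sum_congr rfl fun j _ => ?_
    simp only [map_mul, Complex.conj_ofReal, ← Complex.exp_conj, map_intCast, Complex.conj_I,
      map_ofNat, Complex.conj_ofReal]
    rw [show ((u i : ℂ) * Complex.exp ((eI J i : ℂ) * θ * Complex.I)) *
        ((u j : ℂ) * Complex.exp ((eI J j :ℂ) * θ * (-Complex.I))) * Complex.exp (c * θ * Complex.I)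
        = (u i : ℂ) * u j * (Complex.exp ((eI J i : ℂ) * θ * Complex.I) *
          Complex.exp ((eI J j :ℂ) * θ * (-Complex.I)) * Complex.exp (c * θ * Complex.I)) from by ring,
      ← Complex.exp_add, ← Complex.exp_add]
    congr 2
    push_cast
    ring
  rw [intervalIntegral.integral_congr (g := fun θ => ∑ i, ∑ j,
      (u i:ℂ) * u j * Complex.exp (((eI J i - eI J j + c : ℤ) : ℂ) * θ * Complex.I))
      (fun θ _ => pointwise θ)]
  simp only [Sker]
  rw [intervalIntegral.integral_finset_sum]
  · refine Finset.sum_congr rfl fun i _ => ?_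
    rw [intervalIntegral.integral_finset_sum]
    · exact Finset.sum_congr rfl fun j _ => intervalIntegral.integral_const_mul _ _
    · exact fun j _ => (Continuous.intervalIntegrable (by
        exact continuous_const.mul (cont_exp _)) _ _)
  · exact fun i _ => (Continuous.intervalIntegrable (by
      refine continuous_finset_sum _ fun j _ => continuous_const.mul (cont_exp _)) _ _)

end sums

section realint
variable {J : ℕ} {u : Fin (2*J+1) → ℝ}

lemma intble (u : Fin (2*J+1) → ℝ) (c : ℤ) (a b : ℝ) :
    IntervalIntegrable (fun θ => Ffun u θ * (starRingEnd ℂ) (Ffun u θ) *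
      Complex.exp ((c:ℂ) * θ * Complex.I)) MeasureTheory.volume a b :=
  (((Ffun_cont u).mul ((Complex.continuous_conj).comp (Ffun_cont u))).mul (cont_exp c)).intervalIntegrable _ _

lemma IA (u : Fin (2*J+1) → ℝ) (a : ℝ) :
    ((∫ θ in (-a)..a, Complex.normSq (Ffun u θ) : ℝ) : ℂ)
      = ∑ i, ∑ j, (u i:ℂ) * u j * Sker (eI J i - eI J j) a := by
  rw [← intervalIntegral.integral_ofReal]
  have e1 : ∀ θ : ℝ, ((Complex.normSq (Ffun u θ) : ℝ) : ℂ)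
      = Ffun u θ * (starRingEnd ℂ) (Ffun u θ) * Complex.exp (((0:ℤ):ℂ) * θ * Complex.I) := by
    intro θ
    rw [Complex.mul_conj]
    push_cast
    simp
  rw [intervalIntegral.integral_congr (fun θ _ => e1 θ), Tint u 0 a]
  exact Finset.sum_congr rfl fun i _ => Finset.sum_congr rfl fun j _ => by rw [add_zero]

lemma IB (u : Fin (2*J+1) → ℝ) (a : ℝ) :
    ((∫ θ in (-a)..a, Complex.normSq (Ffun u θ) * Real.cos θ : ℝ) : ℂ)
      = ((∑ i, ∑ j, (u i:ℂ) * u j * Sker (eI J i - eI J j + 1) a)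
        + (∑ i, ∑ j, (u i:ℂ) * u j * Sker (eI J i - eI J j - 1) a)) / 2 := by
  rw [← intervalIntegral.integral_ofReal]
  have e1 : ∀ θ : ℝ, ((Complex.normSq (Ffun u θ) * Real.cos θ : ℝ) : ℂ)
      = (Ffun u θ * (starRingEnd ℂ) (Ffun u θ) * Complex.exp (((1:ℤ):ℂ) * θ * Complex.I)
        + Ffun u θ * (starRingEnd ℂ) (Ffun u θ) * Complex.exp (((-1:ℤ):ℂ) * θ * Complex.I)) / 2 := by
    intro θ
    rw [Complex.ofReal_mul, ← Complex.mul_conj, Complex.ofReal_cos, Complex.cos]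
    push_cast
    ring_nf
  rw [intervalIntegral.integral_congr (fun θ _ => e1 θ)]
  rw [intervalIntegral.integral_div, intervalIntegral.integral_add (intble u 1 _ _) (intble u (-1) _ _)]
  rw [Tint u 1 a, Tint u (-1) a]
  have harg : ∀ i j : Fin (2*J+1), eI J i - eI J j + -1 = eI J i - eI J j - 1 :=
    fun i j => by ring
  simp only [harg]

end realint

lemma zeroset {f : ℝ → ℂ} {w : ℝ → ℝ} {a b : ℝ} (hab : a < b) (hf : Continuous f)
    (hw : Continuous w) (hwnn : ∀ x ∈ Set.Icc a b, 0 ≤ w x)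
    (hwpos : ∀ x ∈ Set.Ioc a b, 0 < w x)
    (hint : (∫ x in a..b, Complex.normSq (f x) * w x) = 0) :
    Set.Infinite {x | x ∈ Set.Ioc a b ∧ f x = 0} := by
  set h : ℝ → ℝ := fun x => Complex.normSq (f x) * |w x| with hh
  have hcont : Continuous h := (Complex.continuous_normSq.comp hf).mul hw.abs
  have hint' : (∫ x in a..b, h x) = 0 := by
    rw [← hint]
    apply intervalIntegral.integral_congr
    intro x hx
    have hx' : x ∈ Set.Icc a b := by
      rwa [Set.uIcc_of_le hab.le] at hx
    simp only [hh]
    rw [_root_.abs_of_nonneg (hwnn x hx')]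
  have hnn : 0 ≤ᵐ[MeasureTheory.volume] h :=
    Filter.Eventually.of_forall fun x => mul_nonneg (Complex.normSq_nonneg _) (abs_nonneg _)
  have hsupp : MeasureTheory.volume (Function.support h ∩ Set.Ioc a b) = 0 := by
    by_contra hne
    have hpos : 0 < MeasureTheory.volume (Function.support h ∩ Set.Ioc a b) :=
      pos_iff_ne_zero.mpr hne
    have := (intervalIntegral.integral_pos_iff_support_of_nonneg_ae hnn
      (hcont.intervalIntegrable _ _)).mpr ⟨hab, hpos⟩
    rw [hint'] at this
    exact lt_irrefl 0 this
  have hZvol : MeasureTheory.volume (Set.Ioc a b \ Function.support h)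
      = MeasureTheory.volume (Set.Ioc a b) := by
    rw [← Set.diff_inter_self_eq_diff]
    exact MeasureTheory.measure_diff_null hsupp
  have hZpos : 0 < MeasureTheory.volume (Set.Ioc a b \ Function.support h) := by
    rw [hZvol, Real.volume_Ioc]
    exact ENNReal.ofReal_pos.mpr (by linarith)
  have hZinf : (Set.Ioc a b \ Function.support h).Infinite := by
    intro hfin
    rw [hfin.measure_zero] at hZpos
    exact lt_irrefl 0 hZpos
  apply hZinf.mono
  intro x hx
  obtain ⟨hx1, hx2⟩ := hx
  refine ⟨hx1, ?_⟩
  have hzero : h x = 0 := Function.notMem_support.mp hx2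
  have hwx : 0 < |w x| := abs_pos.mpr (ne_of_gt (hwpos x hx1))
  have : Complex.normSq (f x) = 0 := by
    rcases mul_eq_zero.mp hzero with h1 | h1
    · exact h1
    · exact absurd h1 (ne_of_gt hwx)
  exact Complex.normSq_eq_zero.mp this

lemma exp_inj_interval {a b θ₁ θ₂ : ℝ} (hlen : b - a < 2*Real.pi)
    (h1 : θ₁ ∈ Set.Ioc a b) (h2 : θ₂ ∈ Set.Ioc a b)
    (h : Complex.exp (θ₁ * Complex.I) = Complex.exp (θ₂ * Complex.I)) : θ₁ = θ₂ := by
  obtain ⟨n, hn⟩ := Complex.exp_eq_exp_iff_exists_int.mp h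
  have h2' : ((θ₁ : ℂ)) * Complex.I = ((θ₂ + 2*Real.pi*n : ℝ) : ℂ) * Complex.I := by
    push_cast
    linear_combination hn
  have h3 : θ₁ = θ₂ + 2*Real.pi*n := by
    have := mul_right_cancel₀ Complex.I_ne_zero h2'
    exact_mod_cast this
  have hpi := Real.pi_pos
  have hn0 : n = 0 := by
    rcases lt_trichotomy n 0 with hlt | heq | hgt
    · exfalso
      have : (n:ℝ) ≤ -1 := by exact_mod_cast Int.le_sub_one_of_lt hlt
      nlinarith [h1.1, h1.2, h2.1, h2.2]
    · exact heq
    · exfalso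
      have : (1:ℝ) ≤ (n:ℝ) := by exact_mod_cast hgt
      nlinarith [h1.1, h1.2, h2.1, h2.2]
  rw [hn0] at h3
  simpa using h3

lemma poly_zero {J : ℕ} (u : Fin (2*J+1) → ℝ) {a b : ℝ} (hlen : b - a < 2*Real.pi)
    (hz : Set.Infinite {x | x ∈ Set.Ioc a b ∧ Ffun u x = 0}) : u = 0 := by
  set Q : Polynomial ℂ := ∑ i : Fin (2*J+1), Polynomial.C (u i : ℂ) * Polynomial.X ^ (i:ℕ) with hQ
  have heval : ∀ θ : ℝ, Q.eval (Complex.exp (θ * Complex.I))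
      = Complex.exp ((J:ℂ) * θ * Complex.I) * Ffun u θ := by
    intro θ
    rw [hQ, Polynomial.eval_finset_sum, Ffun, Finset.mul_sum]
    refine Finset.sum_congr rfl fun i _ => ?_
    rw [Polynomial.eval_mul, Polynomial.eval_pow, Polynomial.eval_C, Polynomial.eval_X]
    rw [← Complex.exp_nat_mul]
    rw [show (Complex.exp ((J:ℂ) * θ * Complex.I) * ((u i : ℂ) * Complex.exp ((eI J i : ℂ) * θ * Complex.I)))
        = (u i : ℂ) * (Complex.exp ((J:ℂ) * θ * Complex.I) * Complex.exp ((eI J i : ℂ) * θ * Complex.I)) from by ring,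
      ← Complex.exp_add]
    congr 2
    rw [eI]
    push_cast
    ring
  have hroots : {z : ℂ | Q.IsRoot z}.Infinite := by
    apply Set.Infinite.mono (s := (fun θ : ℝ => Complex.exp (θ * Complex.I)) '' {x | x ∈ Set.Ioc a b ∧ Ffun u x = 0})
    · rintro z ⟨θ, ⟨hθ1, hθ2⟩, rfl⟩
      show Q.IsRoot _
      rw [Polynomial.IsRoot, heval θ, hθ2, mul_zero]
    · apply Set.Infinite.image ?_ hz
      intro x hx y hy hxy
      exact exp_inj_interval hlen hx.1 hy.1 hxy
  have hQ0 : Q = 0 := Polynomial.eq_zero_of_infinite_isRoot Q hroots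
  funext i
  show u i = 0
  have hcoeff : Q.coeff (i:ℕ) = (u i : ℂ) := by
    rw [hQ, Polynomial.finset_sum_coeff]
    rw [Finset.sum_eq_single i]
    · simp
    · intro j _ hne
      rw [Polynomial.coeff_C_mul, Polynomial.coeff_X_pow,
        if_neg (fun hji => hne (Fin.ext hji.symm)), mul_zero]
    · intro hni
      exact absurd (Finset.mem_univ i) hni
  rw [hQ0] at hcoeff
  simp only [Polynomial.coeff_zero] at hcoeff
  have : (u i : ℂ) = 0 := hcoeff.symm
  exact_mod_cast this

lemma key (J : ℕ) (α σ : ℝ) (h1 : 0 < α) (h2 : α < Real.pi)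
    (u : Fin (2*J+1) → ℝ) (H : EigRel J α σ u)
    (hlast : u (Fin.last (2*J)) = 0) : u = 0 := by
  by_contra hu0
  have hpi := Real.pi_pos
  obtain ⟨i0, hi0⟩ : ∃ i, u i ≠ 0 := by
    by_contra hall
    push_neg at hall
    exact hu0 (funext fun i => hall i)
  set US : ℝ := ∑ i, u i ^ 2 with hUS
  have hUSpos : 0 < US :=
    Finset.sum_pos' (fun i _ => sq_nonneg (u i))
      ⟨i0, Finset.mem_univ i0, pow_two_pos_of_ne_zero hi0⟩
  set S1 : ℝ := ∑ j₀ : Fin (2*J), u j₀.castSucc * u j₀.succ with hS1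
  have hva : ∀ j', ∑ i, (u i : ℂ) * Sker (eI J i - eI J j') α
      = ((2*Real.pi * ((fun i => σ * u i) j') : ℝ):ℂ) := fun j' => inner_alpha H j'
  have hvp : ∀ j', ∑ i, (u i : ℂ) * Sker (eI J i - eI J j') Real.pi
      = ((2*Real.pi * u j' : ℝ):ℂ) := fun j' => inner_pi j'
  -- the four basic integral identities
  have rA1 : (∫ θ in (-α)..α, Complex.normSq (Ffun u θ)) = 2*Real.pi * (σ * US) := by
    have h := IA u α
    rw [sumA α (fun i => σ * u i) hva] at h
    have h2' : ∑ i, u i * (σ * u i) = σ * US := by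
      rw [hUS, Finset.mul_sum]
      exact Finset.sum_congr rfl fun i _ => by ring
    rw [h2'] at h
    exact_mod_cast h
  have rA2 : (∫ θ in (-Real.pi)..Real.pi, Complex.normSq (Ffun u θ)) = 2*Real.pi * US := by
    have h := IA u Real.pi
    rw [sumA Real.pi u hvp] at h
    have h2' : ∑ i, u i * u i = US := by
      rw [hUS]
      exact Finset.sum_congr rfl fun i _ => by ring
    rw [h2'] at h
    exact_mod_cast h
  have rB1 : (∫ θ in (-α)..α, Complex.normSq (Ffun u θ) * Real.cos θ)
      = 2*Real.pi * (σ * S1) := by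
    have h := IB u α
    rw [sumC α (fun i => σ * u i) hva hlast, sumB α (fun i => σ * u i) hva hlast] at h
    have h2' : ∑ j₀ : Fin (2*J), u j₀.castSucc * ((fun i => σ * u i) j₀.succ) = σ * S1 := by
      rw [hS1, Finset.mul_sum]
      exact Finset.sum_congr rfl fun j₀ _ => by ring
    rw [h2'] at h
    have h'' : (∫ θ in (-α)..α, Complex.normSq (Ffun u θ) * Real.cos θ)
        = (2*Real.pi*(σ*S1) + 2*Real.pi*(σ*S1))/2 := by exact_mod_cast h
    linarith
  have rB2 : (∫ θ in (-Real.pi)..Real.pi, Complex.normSq (Ffun u θ) * Real.cos θ)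
      = 2*Real.pi * S1 := by
    have h := IB u Real.pi
    rw [sumC Real.pi u hvp hlast, sumB Real.pi u hvp hlast] at h
    have h'' : (∫ θ in (-Real.pi)..Real.pi, Complex.normSq (Ffun u θ) * Real.cos θ)
        = (2*Real.pi*S1 + 2*Real.pi*S1)/2 := by exact_mod_cast h
    linarith
  -- continuity facts
  have hnFc : Continuous fun θ => Complex.normSq (Ffun u θ) :=
    Complex.continuous_normSq.comp (Ffun_cont u)
  have hnFcos : Continuous fun θ => Complex.normSq (Ffun u θ) * Real.cos θ :=
    hnFc.mul Real.continuous_cos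
  have hgc : Continuous fun θ => Complex.normSq (Ffun u θ) * (Real.cos α - Real.cos θ) :=
    hnFc.mul (continuous_const.sub Real.continuous_cos)
  have hp1c : Continuous fun θ => Complex.normSq (Ffun u θ) * (Real.cos θ - Real.cos α) :=
    hnFc.mul (Real.continuous_cos.sub continuous_const)
  -- σ bounds
  have hnn1 : 0 ≤ ∫ θ in (-α)..α, Complex.normSq (Ffun u θ) :=
    intervalIntegral.integral_nonneg (by linarith) (fun x _ => Complex.normSq_nonneg _)
  have hσ0 : 0 ≤ σ := by
    rw [rA1] at hnn1
    nlinarith [mul_pos hpi hUSpos]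
  have hsplitA : (∫ θ in (-Real.pi)..(-α), Complex.normSq (Ffun u θ))
      + (∫ θ in (-α)..α, Complex.normSq (Ffun u θ))
      + (∫ θ in α..Real.pi, Complex.normSq (Ffun u θ))
      = ∫ θ in (-Real.pi)..Real.pi, Complex.normSq (Ffun u θ) := by
    rw [intervalIntegral.integral_add_adjacent_intervals (hnFc.intervalIntegrable _ _)
      (hnFc.intervalIntegrable _ _)]
    exact intervalIntegral.integral_add_adjacent_intervals (hnFc.intervalIntegrable _ _)
      (hnFc.intervalIntegrable _ _)
  have hnnL : 0 ≤ ∫ θ in (-Real.pi)..(-α), Complex.normSq (Ffun u θ) :=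
    intervalIntegral.integral_nonneg (by linarith) (fun x _ => Complex.normSq_nonneg _)
  have hnnR : 0 ≤ ∫ θ in α..Real.pi, Complex.normSq (Ffun u θ) :=
    intervalIntegral.integral_nonneg (by linarith) (fun x _ => Complex.normSq_nonneg _)
  have hσ1 : σ ≤ 1 := by
    rw [rA1, rA2] at hsplitA
    nlinarith [mul_pos hpi hUSpos]
  -- the three pieces
  have hIg_in : (∫ θ in (-α)..α, Complex.normSq (Ffun u θ) * (Real.cos α - Real.cos θ))
      = Real.cos α * (2*Real.pi*(σ*US)) - 2*Real.pi*(σ*S1) := by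
    have e : (fun θ => Complex.normSq (Ffun u θ) * (Real.cos α - Real.cos θ))
        = fun θ => Real.cos α * Complex.normSq (Ffun u θ)
          - Complex.normSq (Ffun u θ) * Real.cos θ := funext fun θ => by ring
    rw [e, intervalIntegral.integral_sub ((show Continuous fun θ => Real.cos α * Complex.normSq (Ffun u θ) from continuous_const.mul hnFc).intervalIntegrable _ _)
      (hnFcos.intervalIntegrable _ _), intervalIntegral.integral_const_mul, rA1, rB1]
  have hIg_full : (∫ θ in (-Real.pi)..Real.pi, Complex.normSq (Ffun u θ) * (Real.cos α - Real.cos θ))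
      = Real.cos α * (2*Real.pi*US) - 2*Real.pi*S1 := by
    have e : (fun θ => Complex.normSq (Ffun u θ) * (Real.cos α - Real.cos θ))
        = fun θ => Real.cos α * Complex.normSq (Ffun u θ)
          - Complex.normSq (Ffun u θ) * Real.cos θ := funext fun θ => by ring
    rw [e, intervalIntegral.integral_sub ((show Continuous fun θ => Real.cos α * Complex.normSq (Ffun u θ) from continuous_const.mul hnFc).intervalIntegrable _ _)
      (hnFcos.intervalIntegrable _ _), intervalIntegral.integral_const_mul, rA2, rB2]
  have hp1 : (∫ θ in (-α)..α, Complex.normSq (Ffun u θ) * (Real.cos θ - Real.cos α))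
      = 2*Real.pi*(σ*S1) - Real.cos α * (2*Real.pi*(σ*US)) := by
    have e : (fun θ => Complex.normSq (Ffun u θ) * (Real.cos θ - Real.cos α))
        = fun θ => Complex.normSq (Ffun u θ) * Real.cos θ
          - Real.cos α * Complex.normSq (Ffun u θ) := funext fun θ => by ring
    rw [e, intervalIntegral.integral_sub (hnFcos.intervalIntegrable _ _)
      ((show Continuous fun θ => Real.cos α * Complex.normSq (Ffun u θ) from continuous_const.mul hnFc).intervalIntegrable _ _),
      intervalIntegral.integral_const_mul, rA1, rB1]
  have hsplitG : (∫ θ in (-Real.pi)..(-α), Complex.normSq (Ffun u θ) * (Real.cos α - Real.cos θ))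
      + (∫ θ in (-α)..α, Complex.normSq (Ffun u θ) * (Real.cos α - Real.cos θ))
      + (∫ θ in α..Real.pi, Complex.normSq (Ffun u θ) * (Real.cos α - Real.cos θ))
      = ∫ θ in (-Real.pi)..Real.pi, Complex.normSq (Ffun u θ) * (Real.cos α - Real.cos θ) := by
    rw [intervalIntegral.integral_add_adjacent_intervals (hgc.intervalIntegrable _ _)
      (hgc.intervalIntegrable _ _)]
    exact intervalIntegral.integral_add_adjacent_intervals (hgc.intervalIntegrable _ _)
      (hgc.intervalIntegrable _ _)
  -- nonnegativity of the three pieces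
  have hp1nn : 0 ≤ ∫ θ in (-α)..α, Complex.normSq (Ffun u θ) * (Real.cos θ - Real.cos α) := by
    apply intervalIntegral.integral_nonneg (by linarith)
    intro x hx
    have hxa : |x| ≤ α := abs_le.mpr ⟨hx.1, hx.2⟩
    have : Real.cos α ≤ Real.cos |x| :=
      Real.cos_le_cos_of_nonneg_of_le_pi (abs_nonneg x) h2.le hxa
    rw [Real.cos_abs] at this
    have := Complex.normSq_nonneg (Ffun u x)
    nlinarith
  have hg1nn : 0 ≤ ∫ θ in (-Real.pi)..(-α), Complex.normSq (Ffun u θ) * (Real.cos α - Real.cos θ) := by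
    apply intervalIntegral.integral_nonneg (by linarith)
    intro x hx
    have hcos : Real.cos (-x) ≤ Real.cos α :=
      Real.cos_le_cos_of_nonneg_of_le_pi h1.le (by linarith [hx.1]) (by linarith [hx.2])
    rw [Real.cos_neg] at hcos
    have := Complex.normSq_nonneg (Ffun u x)
    nlinarith
  have hg2nn : 0 ≤ ∫ θ in α..Real.pi, Complex.normSq (Ffun u θ) * (Real.cos α - Real.cos θ) := by
    apply intervalIntegral.integral_nonneg (by linarith)
    intro x hx
    have hcos : Real.cos x ≤ Real.cos α :=
      Real.cos_le_cos_of_nonneg_of_le_pi h1.le hx.2 hx.1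
    have := Complex.normSq_nonneg (Ffun u x)
    nlinarith
  -- the balance identity
  have hbal : (1-σ) * (∫ θ in (-α)..α, Complex.normSq (Ffun u θ) * (Real.cos θ - Real.cos α))
      + σ * (∫ θ in (-Real.pi)..(-α), Complex.normSq (Ffun u θ) * (Real.cos α - Real.cos θ))
      + σ * (∫ θ in α..Real.pi, Complex.normSq (Ffun u θ) * (Real.cos α - Real.cos θ)) = 0 := by
    have hg12 : (∫ θ in (-Real.pi)..(-α), Complex.normSq (Ffun u θ) * (Real.cos α - Real.cos θ))
        + (∫ θ in α..Real.pi, Complex.normSq (Ffun u θ) * (Real.cos α - Real.cos θ))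
        = (Real.cos α * (2*Real.pi*US) - 2*Real.pi*S1)
          - (Real.cos α * (2*Real.pi*(σ*US)) - 2*Real.pi*(σ*S1)) := by
      rw [← hIg_full, ← hIg_in]
      linarith [hsplitG]
    rw [hp1]
    linear_combination σ * hg12
  -- conclude
  rcases eq_or_lt_of_le hσ0 with hσe | hσp
  · -- σ = 0
    have hint0 : (∫ θ in (-α)..α, Complex.normSq (Ffun u θ) * (1:ℝ)) = 0 := by
      have e : (fun θ => Complex.normSq (Ffun u θ) * (1:ℝ))
          = fun θ => Complex.normSq (Ffun u θ) := funext fun θ => by ring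
      rw [e, rA1, ← hσe]
      ring
    have hz := zeroset (f := Ffun u) (w := fun _ => (1:ℝ)) (by linarith : -α < α)
      (Ffun_cont u) continuous_const (fun x _ => zero_le_one) (fun x _ => one_pos) hint0
    exact hu0 (poly_zero u (by linarith) hz)
  · -- σ > 0
    have hg2z : (∫ θ in α..Real.pi, Complex.normSq (Ffun u θ) * (Real.cos α - Real.cos θ)) = 0 := by
      have t1 : 0 ≤ (1-σ) * (∫ θ in (-α)..α, Complex.normSq (Ffun u θ) * (Real.cos θ - Real.cos α)) :=
        mul_nonneg (by linarith) hp1nn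
      have t2 : 0 ≤ σ * (∫ θ in (-Real.pi)..(-α), Complex.normSq (Ffun u θ) * (Real.cos α - Real.cos θ)) :=
        mul_nonneg hσ0 hg1nn
      have t3 : 0 ≤ σ * (∫ θ in α..Real.pi, Complex.normSq (Ffun u θ) * (Real.cos α - Real.cos θ)) :=
        mul_nonneg hσ0 hg2nn
      have hz3 : σ * (∫ θ in α..Real.pi, Complex.normSq (Ffun u θ) * (Real.cos α - Real.cos θ)) = 0 := by
        linarith
      rcases mul_eq_zero.mp hz3 with h | h
      · exact absurd h (ne_of_gt hσp)
      · exact h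
    have hz := zeroset (f := Ffun u) (w := fun θ => Real.cos α - Real.cos θ) h2
      (Ffun_cont u) (continuous_const.sub Real.continuous_cos)
      (fun x hx => by
        show 0 ≤ Real.cos α - Real.cos x
        have : Real.cos x ≤ Real.cos α :=
          Real.cos_le_cos_of_nonneg_of_le_pi h1.le hx.2 hx.1
        linarith)
      (fun x hx => by
        show 0 < Real.cos α - Real.cos x
        have : Real.cos x < Real.cos α :=
          Real.cos_lt_cos_of_nonneg_of_le_pi h1.le hx.2 hx.1
        linarith)
      hg2z
    exact hu0 (poly_zero u (by linarith) hz)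

/-- For `0 < α < π` the prolate matrix `P(α)` has simple spectrum:
any two nonzero eigenvectors for the same eigenvalue are linearly dependent. -/
theorem stmt_14 (J : ℕ) (α : ℝ) (h1 : 0 < α) (h2 : α < Real.pi) (σ : ℝ)
    (v w : Fin (2 * J + 1) → ℝ) (hv0 : v ≠ 0) (hw0 : w ≠ 0)
    (hv : (prolateMatrix α J).mulVec v = σ • v)
    (hw : (prolateMatrix α J).mulVec w = σ • w) :
    ∃ t : ℝ, w = t • v := by
  have HV : EigRel J α σ v := by
    intro i
    have h := congrFun hv i
    simpa [Matrix.mulVec, dotProduct, prolateMatrix, eI] using h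
  have HW : EigRel J α σ w := by
    intro i
    have h := congrFun hw i
    simpa [Matrix.mulVec, dotProduct, prolateMatrix, eI] using h
  have hvlast : v (Fin.last (2*J)) ≠ 0 := by
    intro h
    exact hv0 (key J α σ h1 h2 v HV h)
  set t : ℝ := w (Fin.last (2*J)) / v (Fin.last (2*J)) with ht
  refine ⟨t, ?_⟩
  have HU : EigRel J α σ (fun i => w i - t * v i) := by
    intro i
    have e : ∑ j, prolateR α (eI J i) (eI J j) * (w j - t * v j)
        = (∑ j, prolateR α (eI J i) (eI J j) * w j)
          - t * ∑ j, prolateR α (eI J i) (eI J j) * v j := by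
      rw [Finset.mul_sum, ← Finset.sum_sub_distrib]
      exact Finset.sum_congr rfl fun j _ => by ring
    rw [e, HW i, HV i]
    ring
  have hul : (fun i => w i - t * v i) (Fin.last (2*J)) = 0 := by
    show w (Fin.last (2*J)) - t * v (Fin.last (2*J)) = 0
    rw [ht]
    field_simp
    ring
  have hzero := key J α σ h1 h2 _ HU hul
  funext i
  have hz := congrFun hzero i
  have : w i - t * v i = 0 := hz
  simp only [Pi.smul_apply, smul_eq_mul]
  linarith
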